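/- Let V be a Volterra operator with a_{ki} < 0 for all k < i and suppose sup_{i>k} a_{ki} < 0 for each k. If x ∈ S has infinite support, then Vⁿ(x) converges pointwise to the zero sequence. -/
import Mathlib


open Filter Topology

section volterraAux

variable {a : ℕ → ℕ → ℝ}

lemma vol_summable (hbd : ∀ k i, |a k i| ≤ 1) {x : ℕ → ℝ}
    (hx0 : ∀ k, 0 ≤ x k) (hxs : Summable x) (k : ℕ) :
    Summable fun i => a k i * x i := by
  refine Summable.of_abs (Summable.of_nonneg_of_le (fun i => abs_nonneg _) (fun i => ?_) hxs)
  rw [abs_mul, abs_of_nonneg (hx0 i)]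
  exact mul_le_of_le_one_left (hx0 i) (hbd k i)

lemma vol_F_lo (hbd : ∀ k i, |a k i| ≤ 1) {x : ℕ → ℝ}
    (hx0 : ∀ k, 0 ≤ x k) (hxs : Summable x) (hx1 : ∑' k, x k = 1) (k : ℕ) :
    -1 ≤ ∑' i, a k i * x i := by
  have h := Summable.tsum_le_tsum (f := fun i => -(x i)) (g := fun i => a k i * x i)
    (fun i => by have h := mul_le_mul_of_nonneg_right (abs_le.1 (hbd k i)).1 (hx0 i); simpa using h) hxs.neg
    (vol_summable hbd hx0 hxs k)
  rwa [tsum_neg, hx1] at h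

lemma vol_F_hi (hbd : ∀ k i, |a k i| ≤ 1) {x : ℕ → ℝ}
    (hx0 : ∀ k, 0 ≤ x k) (hxs : Summable x) (hx1 : ∑' k, x k = 1) (k : ℕ) :
    ∑' i, a k i * x i ≤ 1 := by
  have h := Summable.tsum_le_tsum (f := fun i => a k i * x i) (g := x)
    (fun i => mul_le_of_le_one_left (hx0 i) ((abs_le.1 (hbd k i)).2))
    (vol_summable hbd hx0 hxs k) hxs
  rwa [hx1] at h

lemma vol_step (hskew : ∀ k i, a k i = -a i k) (hbd : ∀ k i, |a k i| ≤ 1)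
    {x : ℕ → ℝ} (hx0 : ∀ k, 0 ≤ x k) (hxs : Summable x) (hx1 : ∑' k, x k = 1)
    (m : ℕ) {c : ℝ} (hc : ∀ i j, i < m → m ≤ j → a i j ≤ c)
    (y : ℕ → ℝ) (hy : ∀ k, y k = x k * (1 + ∑' i, a k i * x i)) :
    (∀ k, 0 ≤ y k) ∧ Summable y ∧ ∑' k, y k = 1 ∧
      ∑ i ∈ Finset.range m, y i ≤
        (∑ i ∈ Finset.range m, x i) * (1 + c * ∑' j, x (j + m)) := by
  set F : ℕ → ℝ := fun k => ∑' i, a k i * x i with hF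
  have hFs : ∀ k, Summable fun i => a k i * x i := vol_summable hbd hx0 hxs
  have hFlo : ∀ k, -1 ≤ F k := vol_F_lo hbd hx0 hxs hx1
  have hFhi : ∀ k, F k ≤ 1 := vol_F_hi hbd hx0 hxs hx1
  have h0 : ∀ k, 0 ≤ y k := by
    intro k; rw [hy k]; exact mul_nonneg (hx0 k) (by linarith [hFlo k])
  have hle : ∀ k, y k ≤ 2 * x k := by
    intro k; rw [hy k]; nlinarith [hx0 k, hFhi k]
  have hys : Summable y := Summable.of_nonneg_of_le h0 hle (hxs.mul_left 2)
  -- summability of k ↦ x k * F k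
  have hxFs : Summable fun k => x k * F k := by
    refine Summable.of_abs (Summable.of_nonneg_of_le (fun i => abs_nonneg _) (fun i => ?_) hxs)
    rw [abs_mul, abs_of_nonneg (hx0 i)]
    exact mul_le_of_le_one_right (hx0 i) (abs_le.2 ⟨hFlo i, hFhi i⟩)
  -- the double sum is zero by skew-symmetry
  set g : ℕ × ℕ → ℝ := fun p => x p.1 * (a p.1 p.2 * x p.2) with hgdef
  have hgs : Summable g := by
    refine Summable.of_abs (Summable.of_nonneg_of_le (fun p => abs_nonneg _) (fun p => ?_)
      (hxs.mul_of_nonneg hxs (fun k => hx0 k) (fun k => hx0 k)))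
    simp only [hgdef, abs_mul, abs_of_nonneg (hx0 _)]
    exact mul_le_mul_of_nonneg_left (mul_le_of_le_one_left (hx0 p.2) (hbd p.1 p.2)) (hx0 p.1)
  have hgfib : ∀ k, Summable fun i => g (k, i) := fun k => (hFs k).mul_left (x k)
  have hg0 : ∑' p, g p = 0 := by
    have h1 : ∑' p : ℕ × ℕ, g ((Equiv.prodComm ℕ ℕ) p) = ∑' p, g p :=
      (Equiv.prodComm ℕ ℕ).tsum_eq g
    have h2 : ∀ p : ℕ × ℕ, g ((Equiv.prodComm ℕ ℕ) p) = -(g p) := by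
      intro p
      simp only [hgdef, Equiv.prodComm_apply, Prod.fst_swap, Prod.snd_swap]
      rw [hskew p.2 p.1]; ring
    rw [funext h2] at h1
    rw [tsum_neg] at h1
    linarith
  have hsumxF : ∑' k, x k * F k = 0 := by
    have : ∀ k, x k * F k = ∑' i, g (k, i) := by
      intro k; rw [hF]; exact (tsum_mul_left).symm
    rw [funext this, ← Summable.tsum_prod' hgs hgfib, hg0]
  have hysum : ∑' k, y k = 1 := by
    have hyk : ∀ k, y k = x k + x k * F k := by intro k; rw [hy k]; ring
    rw [funext hyk, Summable.tsum_add hxs hxFs, hx1, hsumxF]; norm_num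
  refine ⟨h0, hys, hysum, ?_⟩
  -- head sum estimate
  set T : ℝ := ∑' j, x (j + m) with hT
  have hxtail : Summable fun j => x (j + m) := (summable_nat_add_iff m).2 hxs
  set G : ℕ → ℝ := fun i => ∑' j, a i (j + m) * x (j + m) with hG
  have hGs : ∀ i, Summable fun j => a i (j + m) * x (j + m) :=
    fun i => (summable_nat_add_iff m).2 (hFs i)
  have hsplit : ∀ i, (∑' j, a i j * x j) = (∑ j ∈ Finset.range m, a i j * x j) + G i :=
    fun i => (Summable.sum_add_tsum_nat_add m (hFs i)).symm
  have hGb : ∀ i, i < m → G i ≤ c * T := by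
    intro i hi
    have := Summable.tsum_le_tsum (f := fun j => a i (j + m) * x (j + m))
      (g := fun j => c * x (j + m))
      (fun j => mul_le_mul_of_nonneg_right (hc i (j + m) hi (Nat.le_add_left m j)) (hx0 _))
      (hGs i) (hxtail.mul_left c)
    rwa [tsum_mul_left] at this
  have hD : ∑ i ∈ Finset.range m, ∑ j ∈ Finset.range m, x i * (a i j * x j) = 0 := by
    set D := ∑ i ∈ Finset.range m, ∑ j ∈ Finset.range m, x i * (a i j * x j) with hDdef
    have hDD : D + D = 0 := by
      have h1 : D = ∑ i ∈ Finset.range m, ∑ j ∈ Finset.range m, x j * (a j i * x i) :=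
        Finset.sum_comm
      calc D + D
          = ∑ i ∈ Finset.range m, ∑ j ∈ Finset.range m,
              (x i * (a i j * x j) + x j * (a j i * x i)) := by
            nth_rewrite 2 [h1]
            rw [hDdef, ← Finset.sum_add_distrib]
            exact Finset.sum_congr rfl fun i _ => (Finset.sum_add_distrib).symm
        _ = 0 := by
            refine Finset.sum_eq_zero fun i _ => Finset.sum_eq_zero fun j _ => ?_
            rw [hskew j i]; ring
    linarith
  have hhead : ∑ i ∈ Finset.range m, y i
      = (∑ i ∈ Finset.range m, x i) + ∑ i ∈ Finset.range m, x i * G i := by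
    have : ∀ i, y i = x i + (∑ j ∈ Finset.range m, x i * (a i j * x j)) + x i * G i := by
      intro i
      rw [hy i, hsplit i, mul_add, mul_one, mul_add, Finset.mul_sum]
      ring
    rw [Finset.sum_congr rfl fun i _ => this i, Finset.sum_add_distrib,
      Finset.sum_add_distrib, hD]
    ring
  have hGsum : ∑ i ∈ Finset.range m, x i * G i
      ≤ (∑ i ∈ Finset.range m, x i) * (c * T) := by
    rw [Finset.sum_mul]
    exact Finset.sum_le_sum fun i hi =>
      mul_le_mul_of_nonneg_left (hGb i (Finset.mem_range.1 hi)) (hx0 i)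
  rw [hhead]
  nlinarith [hGsum]

end volterraAux

theorem stmt_17 (a : ℕ → ℕ → ℝ)
    (hskew : ∀ k i, a k i = -a i k) (hbd : ∀ k i, |a k i| ≤ 1)
    (hneg : ∀ k i, k < i → a k i < 0)
    (hsup : ∀ k, ∃ c < (0 : ℝ), ∀ i, k < i → a k i ≤ c)
    (V : (ℕ → ℝ) → (ℕ → ℝ))
    (hV : ∀ x k, V x k = x k * (1 + ∑' i, a k i * x i))
    (x : ℕ → ℝ) (hx : (∀ k, 0 ≤ x k) ∧ Summable x ∧ ∑' k, x k = 1)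
    (hsupp : {i | x i ≠ 0}.Infinite) :
    ∀ k, Tendsto (fun n => (V^[n] x) k) atTop (𝓝 0) := by
  obtain ⟨hx0, hxs, hx1⟩ := hx
  intro k
  set m := k + 1 with hm
  -- uniform negative bound c for rows < m and columns ≥ m
  have hrow : ∀ i, ∃ c < (0:ℝ), ∀ j, i < j → a i j ≤ c := hsup
  choose gc hgc1 hgc2 using hrow
  obtain ⟨c, hcmem, hcmax⟩ :
      ∃ c ∈ (Finset.range m).image gc, ∀ b ∈ (Finset.range m).image gc, b ≤ c := by
    have hne : ((Finset.range m).image gc).Nonempty :=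
      ⟨gc 0, Finset.mem_image_of_mem gc (by simp [hm])⟩
    exact ⟨_, Finset.max'_mem _ hne, fun b hb => Finset.le_max' _ b hb⟩
  have hcneg : c < 0 := by
    obtain ⟨i, _, rfl⟩ := Finset.mem_image.1 hcmem
    exact hgc1 i
  have hc : ∀ i j, i < m → m ≤ j → a i j ≤ c := by
    intro i j hi hj
    have h1 : a i j ≤ gc i := hgc2 i j (lt_of_lt_of_le hi hj)
    exact h1.trans (hcmax _ (Finset.mem_image_of_mem gc (Finset.mem_range.2 hi)))
  -- δ : initial tail mass, positive
  set δ : ℝ := ∑' j, x (j + m) with hδ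
  have hxtail : Summable fun j => x (j + m) := (summable_nat_add_iff m).2 hxs
  have hδpos : 0 < δ := by
    obtain ⟨j, hjmem, hjnot⟩ := hsupp.exists_notMem_finset (Finset.range m)
    have hjm : m ≤ j := le_of_not_gt (fun h => hjnot (Finset.mem_range.2 h))
    have hxj : 0 < x j := lt_of_le_of_ne (hx0 j) (Ne.symm hjmem)
    have hle : x ((j - m) + m) ≤ δ := Summable.le_tsum hxtail (j - m) fun _ _ => hx0 _
    rw [Nat.sub_add_cancel hjm] at hle
    linarith
  set r : ℝ := max (1 + c * δ) 0 with hr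
  have hr0 : 0 ≤ r := le_max_right _ _
  have hr1 : r < 1 := max_lt (by nlinarith) zero_lt_one
  -- the invariant
  have key : ∀ n, ((∀ i, 0 ≤ (V^[n] x) i) ∧ Summable (V^[n] x) ∧ ∑' i, (V^[n] x) i = 1)
      ∧ δ ≤ ∑' j, (V^[n] x) (j + m)
      ∧ ∑ i ∈ Finset.range m, (V^[n] x) i ≤ r ^ n := by
    intro n
    induction n with
    | zero =>
      refine ⟨⟨hx0, hxs, hx1⟩, le_refl _, ?_⟩
      simp only [Function.iterate_zero, id, pow_zero]
      calc ∑ i ∈ Finset.range m, x i ≤ ∑' i, x i :=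
            Summable.sum_le_tsum (Finset.range m) (fun i _ => hx0 i) hxs
        _ = 1 := hx1
    | succ n ih =>
      obtain ⟨⟨hz0, hzs, hz1⟩, hzT, hzH⟩ := ih
      set z := V^[n] x with hzdef
      have hiter : V^[n+1] x = V z := by
        rw [Function.iterate_succ_apply']
      have hstep := vol_step hskew hbd hz0 hzs hz1 m hc (V z) (hV z)
      obtain ⟨hy0, hys, hy1, hyH⟩ := hstep
      have hzH0 : 0 ≤ ∑ i ∈ Finset.range m, z i :=
        Finset.sum_nonneg fun i _ => hz0 i
      -- tails via head sums
      have hzsplit : ∑ i ∈ Finset.range m, z i + ∑' j, z (j + m) = 1 := by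
        rw [Summable.sum_add_tsum_nat_add m hzs, hz1]
      have hysplit : ∑ i ∈ Finset.range m, V z i + ∑' j, (V z) (j + m) = 1 := by
        rw [Summable.sum_add_tsum_nat_add m hys, hy1]
      have hTz : ∑' j, z (j + m) ≤ 1 := by nlinarith
      have hfac : 1 + c * ∑' j, z (j + m) ≤ r := by
        have h1 : c * ∑' j, z (j + m) ≤ c * δ :=
          mul_le_mul_of_nonpos_left hzT (le_of_lt hcneg)
        exact le_trans (by linarith) (le_max_left _ _)
      have hyH2 : ∑ i ∈ Finset.range m, V z i ≤ (∑ i ∈ Finset.range m, z i) * r :=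
        hyH.trans (mul_le_mul_of_nonneg_left hfac hzH0)
      have hheadle : ∑ i ∈ Finset.range m, V z i ≤ ∑ i ∈ Finset.range m, z i := by
        have : (∑ i ∈ Finset.range m, z i) * r ≤ (∑ i ∈ Finset.range m, z i) * 1 := by
          exact mul_le_mul_of_nonneg_left (le_of_lt hr1) hzH0
        nlinarith
      have hTy : δ ≤ ∑' j, (V z) (j + m) := by nlinarith
      have hpow : ∑ i ∈ Finset.range m, V z i ≤ r ^ (n + 1) := by
        calc ∑ i ∈ Finset.range m, V z i ≤ (∑ i ∈ Finset.range m, z i) * r := hyH2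
          _ ≤ r ^ n * r := mul_le_mul_of_nonneg_right hzH hr0
          _ = r ^ (n + 1) := (pow_succ r n).symm
      rw [hiter]
      exact ⟨⟨hy0, hys, hy1⟩, hTy, hpow⟩
  -- squeeze
  have hb : ∀ n, (V^[n] x) k ≤ r ^ n := by
    intro n
    obtain ⟨⟨hz0, _, _⟩, _, hzH⟩ := key n
    calc (V^[n] x) k ≤ ∑ i ∈ Finset.range m, (V^[n] x) i :=
          Finset.single_le_sum (fun i _ => hz0 i) (Finset.mem_range.2 (by omega))
      _ ≤ r ^ n := hzH
  exact squeeze_zero (fun n => (key n).1.1 k) hb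
    (tendsto_pow_atTop_nhds_zero_of_lt_one hr0 hr1)
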